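/- arXiv:1204.5787 — 2 statements merged into one kernel-verified Lean document; each statement's English description precedes it below -/
import Mathlib

section
/- Let R be a commutative ring and M an R-module. If the functor (− ⊗_R M) : Mod_R → Mod_R preserves all small limits (equivalently, all small products), then M is a finitely generated projective R-module. -/
open CategoryTheory CategoryTheory.MonoidalCategory

universe u

namespace Stmt8Aux

open Limits TensorProduct LinearMap

variable (R : Type u) [CommRing R]

/-- The canonical map `(∏ᵢ R) ⊗ A → ∏ᵢ (R ⊗ A)`. -/
noncomputable def Phi (ι : Type u) (A : Type u) [AddCommGroup A] [Module R A] :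
    ((ι → R) ⊗[R] A) →ₗ[R] (ι → R ⊗[R] A) :=
  LinearMap.pi fun i => LinearMap.rTensor A (LinearMap.proj i)

@[simp] lemma Phi_tmul (ι : Type u) (A : Type u) [AddCommGroup A] [Module R A]
    (g : ι → R) (a : A) (i : ι) :
    Phi R ι A (g ⊗ₜ a) i = g i ⊗ₜ a := rfl

variable {R}

/-- Naturality of `Phi` in the module variable. -/
lemma Phi_natural {ι : Type u} {A B : Type u} [AddCommGroup A] [Module R A]
    [AddCommGroup B] [Module R B] (f : A →ₗ[R] B) (x : (ι → R) ⊗[R] A) (i : ι) :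
    Phi R ι B (LinearMap.lTensor (ι → R) f x) i
      = LinearMap.lTensor R f (Phi R ι A x i) := by
  induction x using TensorProduct.induction_on with
  | zero => simp
  | tmul g a => simp
  | add x y hx hy => simp [hx, hy]

/-- If `Phi R A A` is surjective then `A` is a finite module. -/
lemma finite_of_phi_surjective {A : Type u} [AddCommGroup A] [Module R A]
    (hs : Function.Surjective (Phi R A A)) : Module.Finite R A := by
  classical
  obtain ⟨t, ht⟩ := hs fun a => (1 : R) ⊗ₜ a
  obtain ⟨S, rfl⟩ := TensorProduct.exists_finset t
  refine ⟨⟨S.image Prod.snd, top_le_iff.mp ?_⟩⟩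
  rintro a -
  have h1 : Phi R A A (∑ p ∈ S, p.1 ⊗ₜ p.2) a = (1 : R) ⊗ₜ a := by rw [ht]
  rw [map_sum, Finset.sum_apply] at h1
  simp only [Phi_tmul] at h1
  have h3 := congrArg (TensorProduct.lid R A) h1
  rw [map_sum] at h3
  simp only [TensorProduct.lid_tmul, one_smul] at h3
  rw [← h3]
  exact Submodule.sum_mem _ fun p hp =>
    Submodule.smul_mem _ _ (Submodule.subset_span (by
      simp only [Finset.coe_image, Set.mem_image, Finset.mem_coe]
      exact ⟨p, hp, rfl⟩))

set_option synthInstance.maxHeartbeats 400000 in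
/-- Auxiliary identity: every element of `R ⊗ (σ → R)` is recovered from its coordinates. -/
lemma sum_single_eq {σ : Type u} [Fintype σ] [DecidableEq σ] (t : R ⊗[R] (σ → R)) :
    (∑ j : σ, (TensorProduct.lid R (σ → R) t j) ⊗ₜ[R] (Pi.single j 1 : σ → R)) = t := by
  induction t using TensorProduct.induction_on with
  | zero =>
      simp only [map_zero, Pi.zero_apply, TensorProduct.zero_tmul, Finset.sum_const_zero]
  | tmul r f =>
      simp only [TensorProduct.lid_tmul, Pi.smul_apply, smul_eq_mul]
      have : ∀ j : σ, (r * f j) ⊗ₜ[R] (Pi.single j 1 : σ → R)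
          = r ⊗ₜ[R] (f j • (Pi.single j 1 : σ → R)) := by
        intro j
        rw [mul_comm, ← smul_eq_mul, smul_tmul]
      simp_rw [this, ← TensorProduct.tmul_sum]
      congr 1
      funext i
      simp [Pi.single_apply, mul_comm]
  | add x y hx hy =>
      simp only [map_add, Pi.add_apply, TensorProduct.add_tmul, Finset.sum_add_distrib, hx, hy]

/-- `Phi` is surjective when the second factor is a finite free module `σ → R`. -/
lemma phi_pi_surjective (ι : Type u) (σ : Type u) [Fintype σ] [DecidableEq σ] :
    Function.Surjective (Phi R ι (σ → R)) := by
  intro h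
  refine ⟨∑ j : σ, (fun i => TensorProduct.lid R (σ → R) (h i) j) ⊗ₜ[R]
      (Pi.single j 1 : σ → R), ?_⟩
  funext i
  rw [map_sum, Finset.sum_apply]
  simp only [Phi_tmul]
  exact sum_single_eq (h i)

/-- `lTensor R f` is injective whenever `f` is. -/
lemma lTensor_injective_of_injective {A B : Type u} [AddCommGroup A] [Module R A]
    [AddCommGroup B] [Module R B] (f : A →ₗ[R] B) (hf : Function.Injective f) :
    Function.Injective (LinearMap.lTensor R f) := by
  have key : ∀ x : R ⊗[R] A,
      TensorProduct.lid R B (LinearMap.lTensor R f x) = f (TensorProduct.lid R A x) := by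
    intro x
    induction x using TensorProduct.induction_on with
    | zero => simp
    | tmul r a => simp
    | add x y hx hy => simp [hx, hy]
  intro x y hxy
  apply (TensorProduct.lid R A).injective
  apply hf
  rw [← key, ← key, hxy]

end Stmt8Aux

open Stmt8Aux Limits TensorProduct

section Cat

variable {R : Type u} [CommRing R] {M : Type u} [AddCommGroup M] [Module R M]

/-- Whiskering on the right in `ModuleCat` is `rTensor`. -/
lemma whiskerRight_eq_rTensor {A B : Type u} [AddCommGroup A] [Module R A]
    [AddCommGroup B] [Module R B] (f : A →ₗ[R] B)
    (x : A ⊗[R] M) :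
    (ModuleCat.ofHom f ▷ ModuleCat.of R M) x = LinearMap.rTensor M f x := by
  induction x using TensorProduct.induction_on with
  | zero => simp [map_zero]
  | tmul a m =>
      erw [ModuleCat.MonoidalCategory.whiskerRight_apply]
  | add x y hx hy => rw [map_add, map_add, hx, hy]

/-- The key consequence of `h`: the canonical map `(ι → R) ⊗ M → (ι → R ⊗ M)` is bijective. -/
lemma phi_M_bijective
    (h : Limits.PreservesLimitsOfSize.{u, u} (tensorRight (ModuleCat.of R M)))
    (ι : Type u) : Function.Bijective (Phi R ι M) := by
  haveI := h
  set F := tensorRight (ModuleCat.of R M) with hF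
  let Z : ι → ModuleCat.{u} R := fun _ => ModuleCat.of R R
  have hc : IsLimit (F.mapCone (ModuleCat.productCone Z)) :=
    isLimitOfPreserves F (ModuleCat.productConeIsLimit Z)
  let c' : Cone (Discrete.functor Z ⋙ F) :=
    { pt := ModuleCat.of R (ι → R ⊗[R] M)
      π := Discrete.natTrans fun i =>
        ModuleCat.ofHom (LinearMap.proj i.as : (ι → R ⊗[R] M) →ₗ[R] (R ⊗[R] M)) }
  have hc' : IsLimit c' :=
    { lift := fun s => ModuleCat.ofHom
          (LinearMap.pi fun i => (s.π.app ⟨i⟩).hom : s.pt →ₗ[R] (ι → R ⊗[R] M))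
      fac := fun s => by rintro ⟨i⟩; rfl
      uniq := fun s m w => by
        ext x i
        exact congrArg (fun g => ModuleCat.Hom.hom g x) (w ⟨i⟩) }
  let e := hc.conePointUniqueUpToIso hc'
  have he : ∀ t : (ι → R) ⊗[R] M, e.hom t = Phi R ι M t := by
    intro t
    funext i
    have h1 := hc.conePointUniqueUpToIso_hom_comp hc' ⟨i⟩
    have h2 : (c'.π.app ⟨i⟩) (e.hom t) = ((F.mapCone (ModuleCat.productCone Z)).π.app ⟨i⟩) t :=
      congrArg (fun (g : (F.mapCone (ModuleCat.productCone Z)).pt ⟶ F.obj (Z i)) => g t) h1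
    have h3 : ((F.mapCone (ModuleCat.productCone Z)).π.app ⟨i⟩) t
        = LinearMap.rTensor M (LinearMap.proj i : (ι → R) →ₗ[R] R) t :=
      whiskerRight_eq_rTensor (LinearMap.proj i : (ι → R) →ₗ[R] R) t
    exact h2.trans h3
  have hbij : Function.Bijective e.hom := e.toLinearEquiv.bijective
  have : ⇑(Phi R ι M) = ⇑e.hom := by funext t; exact (he t).symm
  rw [this]
  exact hbij

/-- Tensoring with `M` preserving limits implies `M` is flat. -/
lemma flat_of_preserves
    (h : Limits.PreservesLimitsOfSize.{u, u} (tensorRight (ModuleCat.of R M))) :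
    Module.Flat R M := by
  haveI := h
  set F := tensorRight (ModuleCat.of R M) with hF
  haveI : Limits.PreservesLimitsOfSize.{0, 0} F := preservesLimitsOfSize_shrink F
  haveI : F.PreservesMonomorphisms := inferInstance
  rw [Module.Flat.iff_rTensor_preserves_injective_linearMap]
  intro N N' _ _ _ _ f hf
  haveI : Mono (ModuleCat.ofHom f) := (ModuleCat.mono_iff_injective _).mpr hf
  haveI : Mono (F.map (ModuleCat.ofHom f)) := F.map_mono _
  have hinj : Function.Injective (F.map (ModuleCat.ofHom f)) :=
    (ModuleCat.mono_iff_injective _).mp this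
  intro x y hxy
  apply hinj
  show (ModuleCat.ofHom f ▷ ModuleCat.of R M) x = (ModuleCat.ofHom f ▷ ModuleCat.of R M) y
  rw [whiskerRight_eq_rTensor f x, whiskerRight_eq_rTensor f y, hxy]

/-- The kernel of a surjection from a finite free module onto `M` also satisfies the
surjectivity of the canonical product comparison map. -/
lemma phi_ker_surjective
    (hM : ∀ ι : Type u, Function.Bijective (Phi R ι M))
    {σ : Type u} [Fintype σ] [DecidableEq σ]
    (p : (σ → R) →ₗ[R] M) (hp : Function.Surjective p) (ι : Type u) :
    Function.Surjective (Phi R ι (LinearMap.ker p)) := by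
  classical
  set K := LinearMap.ker p
  let j : K →ₗ[R] (σ → R) := K.subtype
  intro y
  obtain ⟨t, ht⟩ := phi_pi_surjective (R := R) ι σ fun i => LinearMap.lTensor R j (y i)
  -- t maps to zero in `(ι → R) ⊗ M`
  have hker : LinearMap.lTensor (ι → R) p t = 0 := by
    apply (hM ι).injective
    rw [map_zero]
    funext i
    rw [Phi_natural p t i, ht]
    rw [← LinearMap.comp_apply, ← LinearMap.lTensor_comp]
    have hpj : p ∘ₗ j = 0 := by
      ext k
      exact k.2
    rw [hpj]
    simp
  -- use exactness to pull `t` back to `(ι → R) ⊗ K`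
  have hexact : Function.Exact (LinearMap.lTensor (ι → R) j) (LinearMap.lTensor (ι → R) p) :=
    lTensor_exact (ι → R) (p.exact_subtype_ker_map) hp
  obtain ⟨s, hst⟩ := (hexact t).mp hker
  refine ⟨s, ?_⟩
  funext i
  apply lTensor_injective_of_injective j (Submodule.injective_subtype K)
  rw [← Phi_natural j s i, hst, ht]

end Cat

/-- If the tensor product functor `− ⊗_R M` on the category of `R`-modules preserves all
small limits, then `M` is a finitely generated projective `R`-module. -/
theorem stmt_8 (R : Type u) [CommRing R] (M : Type u) [AddCommGroup M] [Module R M]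
    (h : Limits.PreservesLimitsOfSize.{u, u} (tensorRight (ModuleCat.of R M))) :
    Module.Finite R M ∧ Module.Projective R M := by
  classical
  have hM : ∀ ι : Type u, Function.Bijective (Phi R ι M) := phi_M_bijective h
  have hfin : Module.Finite R M := finite_of_phi_surjective (hM M).surjective
  have hflat : Module.Flat R M := flat_of_preserves h
  -- build a presentation
  obtain ⟨s, hs⟩ := Module.finite_def.mp hfin
  let p : ({x // x ∈ s} → R) →ₗ[R] M :=
    Fintype.linearCombination R (Subtype.val : {x // x ∈ s} → M)
  have hp : Function.Surjective p := by
    rw [← LinearMap.range_eq_top, Fintype.range_linearCombination]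
    rw [Subtype.range_coe_subtype]
    simpa using hs
  have hKfin : Module.Finite R (LinearMap.ker p) :=
    finite_of_phi_surjective
      (phi_ker_surjective hM p hp (LinearMap.ker p))
  have hKfg : (LinearMap.ker p).FG := Module.Finite.iff_fg.mp hKfin
  have hfp : Module.FinitePresentation R M :=
    Module.finitePresentation_of_free_of_surjective p hp hKfg
  refine ⟨hfin, ?_⟩
  apply Module.projective_of_localization_maximal
  intro I hI
  haveI : Module.Flat (Localization.AtPrime I) (LocalizedModule I.primeCompl M) :=
    Module.Flat.localizedModule I.primeCompl
  haveI : Module.Free (Localization.AtPrime I) (LocalizedModule I.primeCompl M) :=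
    Module.free_of_flat_of_isLocalRing
  infer_instance
end

section
/- Let C be a category with finite limits. If f : X ⇄ Y : g is a homotopy equivalence of cosimplicial objects in C (i.e., there exist simplicial homotopies k from id_X to g∘f and l from id_Y to f∘g), then the induced map on limits lim_Δ X → lim_Δ Y is an isomorphism. -/
open CategoryTheory CategoryTheory.Limits

/-- A (right) simplicial homotopy between two maps `h0 h1 : X ⟶ Y` of cosimplicial
objects in a category `C`.  This is exactly the data of a map `h : X ⟶ Y ⊗ Δ¹`, where
`(Y ⊗ Δ¹)_n = ∏_{(Δ¹)_n} Y_n` and `(Δ¹)_n = Hom_Δ([n], [1])`, whose two restrictions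
along the inclusions `Δ⁰ → Δ¹` (i.e. the projections at the two constant maps `[n] → [1]`)
are `h0` and `h1`: unravelling that definition componentwise gives precisely the fields
below, avoiding any existence assumption on products in `C`. -/
structure CosimplicialHomotopy {C : Type*} [Category C] {X Y : CosimplicialObject C}
    (h0 h1 : X ⟶ Y) where
  H : ∀ (n : SimplexCategory), (n ⟶ SimplexCategory.mk 1) → (X.obj n ⟶ Y.obj n)
  naturality : ∀ {n m : SimplexCategory} (θ : n ⟶ m) (g : m ⟶ SimplexCategory.mk 1),
      X.map θ ≫ H m g = H n (θ ≫ g) ≫ Y.map θ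
  restriction_zero : ∀ n, H n (SimplexCategory.const n (SimplexCategory.mk 1) 0) = h0.app n
  restriction_one : ∀ n, H n (SimplexCategory.const n (SimplexCategory.mk 1) 1) = h1.app n

/-- Homotopic maps of cosimplicial objects induce equal maps on limits. -/
theorem CosimplicialHomotopy.limMap_eq {C : Type*} [Category C]
    [HasLimitsOfShape SimplexCategory C] {X Y : CosimplicialObject C}
    {h0 h1 : X ⟶ Y} [HasLimit X] [HasLimit Y] (Hh : CosimplicialHomotopy h0 h1) :
    limMap h0 = limMap h1 := by
  set one := SimplexCategory.mk 1 with hone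
  set zero := SimplexCategory.mk 0 with hzero
  -- vertex inclusions [0] ⟶ [1]
  set ι0 : zero ⟶ one := SimplexCategory.const zero one 0 with hι0
  set ι1 : zero ⟶ one := SimplexCategory.const zero one 1 with hι1
  -- the key equality at level [1]
  have key : limit.π X one ≫ h0.app one = limit.π X one ≫ h1.app one := by
    have w0 : limit.π X zero ≫ X.map ι0 = limit.π X one := limit.w X ι0
    have w1 : limit.π X zero ≫ X.map ι1 = limit.π X one := limit.w X ι1
    have n0 : X.map ι0 ≫ Hh.H one (𝟙 one) = Hh.H zero ι0 ≫ Y.map ι0 := by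
      have := Hh.naturality ι0 (𝟙 one)
      simpa using this
    have n1 : X.map ι1 ≫ Hh.H one (𝟙 one) = Hh.H zero ι1 ≫ Y.map ι1 := by
      have := Hh.naturality ι1 (𝟙 one)
      simpa using this
    calc limit.π X one ≫ h0.app one
        = limit.π X zero ≫ X.map ι0 ≫ h0.app one := by rw [← w0, Category.assoc]
      _ = limit.π X zero ≫ h0.app zero ≫ Y.map ι0 := by rw [h0.naturality]
      _ = limit.π X zero ≫ Hh.H zero ι0 ≫ Y.map ι0 := by rw [Hh.restriction_zero]
      _ = limit.π X zero ≫ X.map ι0 ≫ Hh.H one (𝟙 one) := by rw [n0]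
      _ = limit.π X one ≫ Hh.H one (𝟙 one) := by rw [← Category.assoc, w0]
      _ = limit.π X zero ≫ X.map ι1 ≫ Hh.H one (𝟙 one) := by rw [← Category.assoc, w1]
      _ = limit.π X zero ≫ Hh.H zero ι1 ≫ Y.map ι1 := by rw [n1]
      _ = limit.π X zero ≫ h1.app zero ≫ Y.map ι1 := by rw [Hh.restriction_one]
      _ = limit.π X zero ≫ X.map ι1 ≫ h1.app one := by rw [h1.naturality]
      _ = limit.π X one ≫ h1.app one := by rw [← Category.assoc, w1]
  apply limit.hom_ext
  intro j
  -- a map [1] ⟶ j (constant at vertex 0)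
  set θ : one ⟶ j := SimplexCategory.const one j 0 with hθ
  have wj : limit.π X one ≫ X.map θ = limit.π X j := limit.w X θ
  erw [limMap_π, limMap_π, ← wj, Category.assoc, Category.assoc,
    h0.naturality, h1.naturality, ← Category.assoc, ← Category.assoc, key]

/-- Let `C` be a category with finite limits (in which limits of cosimplicial objects
exist).  If `f : X ⇄ Y : g` is a homotopy equivalence of cosimplicial objects in `C`
(there are simplicial homotopies from `id_X` to `g ∘ f` and from `id_Y` to `f ∘ g`),
then the induced map on limits `lim_Δ X ⟶ lim_Δ Y` is an isomorphism. -/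
theorem stmt_15 {C : Type*} [Category C] [HasFiniteLimits C]
    [HasLimitsOfShape SimplexCategory C]
    (X Y : CosimplicialObject C) (f : X ⟶ Y) (g : Y ⟶ X)
    (k : CosimplicialHomotopy (𝟙 X) (f ≫ g))
    (l : CosimplicialHomotopy (𝟙 Y) (g ≫ f)) :
    IsIso (@limMap _ _ _ _ X Y (HasLimitsOfShape.has_limit (J := SimplexCategory) X)
      (HasLimitsOfShape.has_limit (J := SimplexCategory) Y) f) := by
  haveI : HasLimit X := HasLimitsOfShape.has_limit (J := SimplexCategory) X
  haveI : HasLimit Y := HasLimitsOfShape.has_limit (J := SimplexCategory) Y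
  have comp1 : limMap f ≫ limMap g = limMap (f ≫ g) := by
    apply limit.hom_ext; intro j; erw [Category.assoc, limMap_π, limMap_π_assoc, limMap_π]; rfl
  have comp2 : limMap g ≫ limMap f = limMap (g ≫ f) := by
    apply limit.hom_ext; intro j; erw [Category.assoc, limMap_π, limMap_π_assoc, limMap_π]; rfl
  have id1 : limMap (𝟙 X) = 𝟙 (limit X) := by
    apply limit.hom_ext; intro j; erw [limMap_π, Category.id_comp]; exact Category.comp_id (limit.π X j)
  have id2 : limMap (𝟙 Y) = 𝟙 (limit Y) := by
    apply limit.hom_ext; intro j; erw [limMap_π, Category.id_comp]; exact Category.comp_id (limit.π Y j)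
  exact ⟨limMap g, by erw [comp1, ← k.limMap_eq, id1], by erw [comp2, ← l.limMap_eq, id2]⟩
end
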